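/- Let X be an infinite-dimensional real Banach space, q ∈ [1,∞), and suppose X has property (m_q*). Suppose there is a sequence (P_n)_{n≥1} of continuous finite-rank linear projections on X such that P_n ∘ P_m = P_{min(m,n)} for all m,n, P_n ≠ P_{n+1} for all n, P_n x → x in norm for every x ∈ X, and ‖x* ∘ P_n − x*‖ → 0 for every x* ∈ X* (i.e., X has a shrinking finite-dimensional decomposition). Then for every ε ∈ (0,2), s_ε B_{X*} = (1 − (ε/2)^q)^{1/q} · B_{X*} = {x* ∈ X* : ‖x*‖ ≤ (1 − (ε/2)^q)^{1/q}}. -/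

import Mathlib

open Filter Topology Metric

/-- The ε-Szlenk derivation of the closed dual unit ball of `X`. -/
def szlenkDeriv (X : Type*) [NormedAddCommGroup X] [NormedSpace ℝ X] (ε : ℝ) :
    Set (StrongDual ℝ X) :=
  {x : StrongDual ℝ X | ‖x‖ ≤ 1 ∧
    ∀ V : Set (StrongDual ℝ X),
      IsOpen ((StrongDual.toWeakDual '' V : Set (WeakDual ℝ X))) → x ∈ V →
        ε < Metric.diam (Metric.closedBall (0 : StrongDual ℝ X) 1 ∩ V)}

/-- A sequence in the dual is weak*-null if it tends to `0` in the weak* topology. -/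
def WeakStarNull {X : Type*} [NormedAddCommGroup X] [NormedSpace ℝ X]
    (u : ℕ → StrongDual ℝ X) : Prop :=
  Filter.Tendsto (fun n => StrongDual.toWeakDual (u n)) Filter.atTop
    (nhds (0 : WeakDual ℝ X))


/-- Kalton–Werner property (m_q*). -/
def PropmqStar (X : Type*) [NormedAddCommGroup X] [NormedSpace ℝ X] (q : ℝ) : Prop :=
  ∀ x : StrongDual ℝ X, ∀ u : ℕ → StrongDual ℝ X, WeakStarNull u →
    Filter.limsup (fun n => ‖x + u n‖) Filter.atTop
      = (‖x‖ ^ q + (Filter.limsup (fun n => ‖u n‖) Filter.atTop) ^ q) ^ (1 / q)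

lemma weakStarNull_iff {X : Type*} [NormedAddCommGroup X] [NormedSpace ℝ X]
    (u : ℕ → StrongDual ℝ X) :
    WeakStarNull u ↔ ∀ x : X, Tendsto (fun n => u n x) atTop (𝓝 0) := by
  rw [WeakStarNull, tendsto_iff_forall_eval_tendsto_topDualPairing]
  exact Iff.rfl

lemma exists_norm_one_eq_zero_on (X : Type*) [NormedAddCommGroup X] [NormedSpace ℝ X]
    (S : Submodule ℝ X) (hS : IsClosed (S : Set X)) (hne : S ≠ ⊤) :
    ∃ f : StrongDual ℝ X, ‖f‖ = 1 ∧ ∀ y ∈ S, f y = 0 := by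
  obtain ⟨x, hx⟩ : ∃ x, x ∉ S := by
    by_contra h; push_neg at h; exact hne (Submodule.eq_top_iff'.2 h)
  obtain ⟨f, u, hfx, hfS⟩ := geometric_hahn_banach_point_closed (S.convex) hS hx
  have hzero : ∀ y ∈ S, f y = 0 := by
    intro y hy
    by_contra hfy
    have h1 : ∀ t : ℝ, u < t * f y := by
      intro t
      have := hfS (t • y) (S.smul_mem t hy)
      simpa [map_smul, smul_eq_mul] using this
    rcases lt_trichotomy (f y) 0 with h | h | h
    · have := h1 ((u - 1) / f y)
      rw [div_mul_cancel₀ _ (ne_of_lt h)] at this; linarith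
    · exact hfy h
    · have := h1 ((u - 1) / f y)
      rw [div_mul_cancel₀ _ (ne_of_gt h)] at this; linarith
  have hu0 : u < 0 := by simpa using hfS 0 S.zero_mem
  have hf0 : f ≠ 0 := by
    intro h; rw [h] at hfx; simp at hfx; linarith
  have hnf : ‖f‖ ≠ 0 := norm_ne_zero_iff.2 hf0
  refine ⟨‖f‖⁻¹ • f, ?_, ?_⟩
  · rw [norm_smul, norm_inv, norm_norm, inv_mul_cancel₀ hnf]
  · intro y hy
    simp [hzero y hy]

set_option maxHeartbeats 2000000 in
theorem szlenkDeriv_eq_ball_of_propmqStar_of_shrinkingFDD (X : Type*)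
    [NormedAddCommGroup X] [NormedSpace ℝ X] [CompleteSpace X]
    (hinf : ¬ FiniteDimensional ℝ X)
    (q : ℝ) (hq : 1 ≤ q) (hmq : PropmqStar X q)
    (P : ℕ → X →L[ℝ] X)
    (hrank : ∀ n, FiniteDimensional ℝ (LinearMap.range (P n : X →ₗ[ℝ] X)))
    (hcomp : ∀ m n, (P n).comp (P m) = P (min m n))
    (hne : ∀ n, P n ≠ P (n + 1))
    (hconv : ∀ x : X, Filter.Tendsto (fun n => P n x) Filter.atTop (nhds x))
    (hshrink : ∀ x : StrongDual ℝ X,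
      Filter.Tendsto (fun n => ‖x.comp (P n) - x‖) Filter.atTop (nhds (0 : ℝ)))
    (ε : ℝ) (hε : ε ∈ Set.Ioo (0 : ℝ) 2) :
    szlenkDeriv X ε
      = Metric.closedBall (0 : StrongDual ℝ X) ((1 - (ε / 2) ^ q) ^ (1 / q)) := by
  obtain ⟨hε0, hε2⟩ := hε
  have hq0 : (0:ℝ) < q := lt_of_lt_of_le one_pos hq
  have hq0' : q ≠ 0 := ne_of_gt hq0
  have h2ε : (0:ℝ) < ε / 2 := by linarith
  have hε21 : ε / 2 < 1 := by linarith
  have hpow1 : (ε / 2) ^ q < 1 := Real.rpow_lt_one h2ε.le hε21 hq0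
  have hpow0 : (0:ℝ) ≤ (ε / 2) ^ q := Real.rpow_nonneg h2ε.le q
  have hr0 : (0:ℝ) < 1 - (ε / 2) ^ q := by linarith
  set r : ℝ := (1 - (ε / 2) ^ q) ^ (1 / q) with hr_def
  have hrpos : 0 < r := Real.rpow_pos_of_pos hr0 _
  have hr1 : r ≤ 1 := Real.rpow_le_one hr0.le (by linarith) (by positivity)
  have hrq : r ^ q = 1 - (ε / 2) ^ q := by
    rw [hr_def, one_div, Real.rpow_inv_rpow hr0.le hq0']
  -- the norm-one functionals vanishing on the ranges of the projections
  have hSclosed : ∀ n, IsClosed ((LinearMap.range (P n : X →ₗ[ℝ] X) : Submodule ℝ X) : Set X) := by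
    intro n
    haveI := hrank n
    exact Submodule.closed_of_finiteDimensional _
  have hSne : ∀ n, (LinearMap.range (P n : X →ₗ[ℝ] X) : Submodule ℝ X) ≠ ⊤ := by
    intro n h
    apply hinf
    haveI : FiniteDimensional ℝ (⊤ : Submodule ℝ X) := h ▸ hrank n
    exact Submodule.topEquiv.finiteDimensional
  choose g hg1 hg2 using fun n =>
    exists_norm_one_eq_zero_on X (LinearMap.range (P n : X →ₗ[ℝ] X)) (hSclosed n) (hSne n)
  have hgw : ∀ w : X, Tendsto (fun n => g n w) atTop (𝓝 (0:ℝ)) := by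
    intro w
    have hb : ∀ n, ‖g n w‖ ≤ ‖w - P n w‖ := by
      intro n
      have h0 : g n (P n w) = 0 := hg2 n _ ⟨w, rfl⟩
      have : g n w = g n (w - P n w) := by rw [map_sub, h0, sub_zero]
      rw [this]
      calc ‖g n (w - P n w)‖ ≤ ‖g n‖ * ‖w - P n w‖ := (g n).le_opNorm _
        _ = ‖w - P n w‖ := by rw [hg1 n, one_mul]
    have h0 : Tendsto (fun n => w - P n w) atTop (𝓝 0) := by
      have := (tendsto_const_nhds : Tendsto (fun _ : ℕ => w) atTop (𝓝 w)).sub (hconv w)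
      rwa [sub_self] at this
    exact squeeze_zero_norm hb (by simpa using h0.norm)
  have hnull : ∀ c : ℝ, WeakStarNull (fun n => c • g n) := by
    intro c
    rw [weakStarNull_iff]
    intro w
    simpa using ((hgw w).const_mul c)
  ext x
  simp only [szlenkDeriv, Set.mem_setOf_eq, Metric.mem_closedBall, dist_zero_right]
  constructor
  · -- hard direction
    rintro ⟨hx1, hV⟩
    -- X is separable
    have hdense : Dense (⋃ n, ((LinearMap.range (P n : X →ₗ[ℝ] X) : Submodule ℝ X) : Set X)) := by
      intro w
      exact mem_closure_of_tendsto (hconv w)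
        (Filter.Eventually.of_forall fun n => Set.mem_iUnion.2 ⟨n, ⟨w, rfl⟩⟩)
    haveI hsepX : TopologicalSpace.SeparableSpace X := by
      refine hdense.isSeparable_iff.1 ?_
      refine TopologicalSpace.isSeparable_iUnion.2 fun n => ?_
      haveI := hrank n
      exact TopologicalSpace.IsSeparable.of_subtype _
    haveI : Nonempty X := ⟨0⟩
    set d : ℕ → X := TopologicalSpace.denseSeq X with hd_def
    have hdr : DenseRange d := TopologicalSpace.denseRange_denseSeq X
    -- a countable family of weak* neighborhoods of x
    set U : ℕ → Set (WeakDual ℝ X) := fun k =>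
      {w | ∀ j ∈ Finset.range (k+1), |w (d j) - x (d j)| < 1/((k:ℝ)+1)} with hU_def
    set W : ℕ → Set (StrongDual ℝ X) := fun k =>
      StrongDual.toWeakDual ⁻¹' U k with hW_def
    have hUopen : ∀ k, IsOpen (U k) := by
      intro k
      have hUeq : U k = ⋂ j ∈ Finset.range (k+1),
          {w : WeakDual ℝ X | |w (d j) - x (d j)| < 1/((k:ℝ)+1)} := by
        ext w; simp [hU_def]
      rw [hUeq]
      refine isOpen_biInter_finset fun j _ => ?_
      have hc : Continuous fun w : WeakDual ℝ X => w (d j) := WeakDual.eval_continuous _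
      exact isOpen_lt ((hc.sub continuous_const).abs) continuous_const
    have himg : ∀ k, IsOpen ((StrongDual.toWeakDual '' W k : Set (WeakDual ℝ X))) := by
      intro k
      rw [hW_def, Set.image_preimage_eq _ (LinearEquiv.surjective _)]
      exact hUopen k
    have hxW : ∀ k, x ∈ W k := by
      intro k j hj
      simp only [StrongDual.coe_toWeakDual, sub_self, abs_zero]
      positivity
    -- select pairs of far-apart points in each neighborhood
    have hsel : ∀ k : ℕ, ∃ p, (p ∈ Metric.closedBall (0 : StrongDual ℝ X) 1 ∩ W k) ∧
        ∃ p', (p' ∈ Metric.closedBall (0 : StrongDual ℝ X) 1 ∩ W k) ∧ ε < dist p p' := by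
      intro k
      have hdk := hV (W k) (himg k) (hxW k)
      by_contra hcon
      push_neg at hcon
      exact absurd hdk (not_lt.2 (Metric.diam_le_of_forall_dist_le hε0.le
        (fun p hp p' hp' => hcon p hp p' hp')))
    choose y hy z hz hyz using hsel
    have hyb : ∀ k, ‖y k‖ ≤ 1 := fun k => by
      have := (hy k).1; rwa [Metric.mem_closedBall, dist_zero_right] at this
    have hzb : ∀ k, ‖z k‖ ≤ 1 := fun k => by
      have := (hz k).1; rwa [Metric.mem_closedBall, dist_zero_right] at this
    have hub : ∀ k, ‖y k - x‖ ≤ 2 := fun k => by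
      calc ‖y k - x‖ ≤ ‖y k‖ + ‖x‖ := norm_sub_le _ _
        _ ≤ 2 := by linarith [hyb k]
    have hvb : ∀ k, ‖z k - x‖ ≤ 2 := fun k => by
      calc ‖z k - x‖ ≤ ‖z k‖ + ‖x‖ := norm_sub_le _ _
        _ ≤ 2 := by linarith [hzb k]
    -- the difference sequences are weak*-null
    have hWnull : ∀ w : ℕ → StrongDual ℝ X,
        (∀ k, w k ∈ Metric.closedBall (0 : StrongDual ℝ X) 1 ∩ W k) →
        WeakStarNull (fun k => w k - x) := by
      intro w hw
      have hwb : ∀ k, ‖w k - x‖ ≤ 2 := fun k => by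
        have h1 : ‖w k‖ ≤ 1 := by
          have := (hw k).1; rwa [Metric.mem_closedBall, dist_zero_right] at this
        calc ‖w k - x‖ ≤ ‖w k‖ + ‖x‖ := norm_sub_le _ _
          _ ≤ 2 := by linarith
      rw [weakStarNull_iff]
      intro a
      rw [NormedAddCommGroup.tendsto_nhds_zero]
      intro δ hδ
      obtain ⟨j, hj⟩ := Metric.denseRange_iff.1 hdr a (δ/8) (by positivity)
      rw [dist_eq_norm] at hj
      have hsmall : Tendsto (fun k : ℕ => 1/((k:ℝ)+1)) atTop (𝓝 0) :=
        tendsto_one_div_add_atTop_nhds_zero_nat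
      have hev1 : ∀ᶠ k : ℕ in atTop, 1/((k:ℝ)+1) < δ/2 :=
        hsmall.eventually_lt_const (by positivity)
      filter_upwards [hev1, eventually_ge_atTop j] with k hk1 hk2
      have hUk : |w k (d j) - x (d j)| < 1/((k:ℝ)+1) :=
        (hw k).2 j (Finset.mem_range.2 (Nat.lt_succ_of_le hk2))
      have hsplit : (w k - x) a = (w k - x) (a - d j) + (w k (d j) - x (d j)) := by
        simp only [ContinuousLinearMap.sub_apply, map_sub]
        ring
      have h1 : ‖(w k - x) (a - d j)‖ ≤ 2 * (δ/8) := by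
        calc ‖(w k - x) (a - d j)‖ ≤ ‖w k - x‖ * ‖a - d j‖ := (w k - x).le_opNorm _
          _ ≤ 2 * (δ/8) :=
            mul_le_mul (hwb k) hj.le (norm_nonneg _) (by norm_num)
      calc ‖(w k - x) a‖ = |(w k - x) (a - d j) + (w k (d j) - x (d j))| := by
            rw [hsplit, Real.norm_eq_abs]
        _ ≤ |(w k - x) (a - d j)| + |w k (d j) - x (d j)| := abs_add_le _ _
        _ < 2 * (δ/8) + δ/2 := by
            have := h1; rw [Real.norm_eq_abs] at this
            exact add_lt_add_of_le_of_lt this (lt_trans hUk hk1)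
        _ ≤ δ := by linarith
    -- limsup bookkeeping
    set A : ℝ := limsup (fun k => ‖y k - x‖) atTop with hA_def
    set B : ℝ := limsup (fun k => ‖z k - x‖) atTop with hB_def
    have hbu : IsBoundedUnder (· ≤ ·) atTop (fun k => ‖y k - x‖) :=
      isBoundedUnder_of ⟨2, hub⟩
    have hbv : IsBoundedUnder (· ≤ ·) atTop (fun k => ‖z k - x‖) :=
      isBoundedUnder_of ⟨2, hvb⟩
    have hA0 : 0 ≤ A :=
      le_limsup_of_frequently_le (Frequently.of_forall fun k => norm_nonneg _) hbu
    have hB0 : 0 ≤ B :=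
      le_limsup_of_frequently_le (Frequently.of_forall fun k => norm_nonneg _) hbv
    have hineq : ∀ w : ℕ → StrongDual ℝ X, (∀ k, ‖w k‖ ≤ 1) →
        limsup (fun k => ‖x + (w k - x)‖) atTop ≤ 1 := by
      intro w hwb
      have hcb : IsCoboundedUnder (· ≤ ·) atTop (fun k => ‖x + (w k - x)‖) :=
        (isBoundedUnder_of ⟨0, fun k => norm_nonneg _⟩ :
          IsBoundedUnder (· ≥ ·) atTop (fun k => ‖x + (w k - x)‖)).isCoboundedUnder_le
      refine limsup_le_of_le hcb (Eventually.of_forall fun k => ?_)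
      have he : x + (w k - x) = w k := by abel
      rw [he]; exact hwb k
    have h1 := hineq y hyb
    rw [hmq x (fun k => y k - x) (hWnull y hy)] at h1
    have h2 := hineq z hzb
    rw [hmq x (fun k => z k - x) (hWnull z hz)] at h2
    have hxa : ‖x‖^q + A^q ≤ 1 := by
      have hs0 : 0 ≤ ‖x‖^q + A^q :=
        add_nonneg (Real.rpow_nonneg (norm_nonneg _) _) (Real.rpow_nonneg hA0 _)
      rw [one_div] at h1
      have h3 := Real.rpow_le_rpow (Real.rpow_nonneg hs0 _) h1 hq0.le
      rwa [Real.rpow_inv_rpow hs0 hq0', Real.one_rpow] at h3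
    have hxb : ‖x‖^q + B^q ≤ 1 := by
      have hs0 : 0 ≤ ‖x‖^q + B^q :=
        add_nonneg (Real.rpow_nonneg (norm_nonneg _) _) (Real.rpow_nonneg hB0 _)
      rw [one_div] at h2
      have h3 := Real.rpow_le_rpow (Real.rpow_nonneg hs0 _) h2 hq0.le
      rwa [Real.rpow_inv_rpow hs0 hq0', Real.one_rpow] at h3
    have hab : ε ≤ A + B := by
      by_contra hcon
      push_neg at hcon
      have e1 : ∀ᶠ k in atTop, ‖y k - x‖ < A + (ε-(A+B))/2 :=
        eventually_lt_of_limsup_lt (by rw [← hA_def]; linarith) hbu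
      have e2 : ∀ᶠ k in atTop, ‖z k - x‖ < B + (ε-(A+B))/2 :=
        eventually_lt_of_limsup_lt (by rw [← hB_def]; linarith) hbv
      obtain ⟨k, hk1, hk2⟩ := (e1.and e2).exists
      have h3 : ε < dist (y k) (z k) := hyz k
      rw [dist_eq_norm] at h3
      have h4 : ‖y k - z k‖ ≤ ‖y k - x‖ + ‖z k - x‖ := by
        have he : y k - z k = (y k - x) - (z k - x) := by abel
        rw [he]; exact norm_sub_le _ _
      linarith
    have hmax : ε/2 ≤ max A B := by
      rcases le_total A B with h|h
      · rw [max_eq_right h]; linarith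
      · rw [max_eq_left h]; linarith
    have hxq : ‖x‖^q ≤ 1 - (ε/2)^q := by
      have h5 : (ε/2)^q ≤ (max A B)^q := Real.rpow_le_rpow h2ε.le hmax hq0.le
      rcases max_cases A B with ⟨hm,_⟩|⟨hm,_⟩
      · rw [hm] at h5; linarith
      · rw [hm] at h5; linarith
    have h6 := Real.rpow_le_rpow (Real.rpow_nonneg (norm_nonneg x) q) hxq
      (by positivity : (0:ℝ) ≤ 1/q)
    rw [one_div, Real.rpow_rpow_inv (norm_nonneg x) hq0'] at h6
    rw [hr_def, one_div]
    exact h6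
  · -- easy direction: the ball is contained in the derived set
    intro hx
    refine ⟨hx.trans hr1, ?_⟩
    intro V hVo hxV
    -- V is norm open
    have hVopen' : IsOpen V := by
      have hVe : V = StrongDual.toWeakDual ⁻¹'
          (StrongDual.toWeakDual '' V : Set (WeakDual ℝ X)) :=
        (Set.preimage_image_eq V (LinearEquiv.injective _)).symm
      rw [hVe]
      exact hVo.preimage NormedSpace.Dual.toWeakDual_continuous
    obtain ⟨ρ, hρ, hball⟩ := Metric.isOpen_iff.1 hVopen' x hxV
    -- move slightly inside the ball
    set t : ℝ := max (1/2) (1 - ρ / (2 * (‖x‖ + 1))) with ht_def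
    have hxpos : (0:ℝ) < ‖x‖ + 1 := by positivity
    have ht1 : t < 1 := by
      apply max_lt (by norm_num)
      have : 0 < ρ / (2 * (‖x‖ + 1)) := by positivity
      linarith
    have ht0 : 0 < t := lt_of_lt_of_le (by norm_num) (le_max_left _ _)
    have h1t : 1 - t ≤ ρ / (2 * (‖x‖ + 1)) := by
      have := le_max_right (1/2) (1 - ρ / (2 * (‖x‖ + 1)))
      linarith [this.trans (le_refl t)]
    set y : StrongDual ℝ X := t • x with hy_def
    have hyx : ‖y - x‖ < ρ := by
      have hyx1 : y - x = (t - 1) • x := by rw [hy_def]; module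
      rw [hyx1, norm_smul, Real.norm_eq_abs, abs_of_nonpos (by linarith), neg_sub]
      have h3 : ρ / (2 * (‖x‖ + 1)) * (‖x‖ + 1) = ρ / 2 := by field_simp
      have h4 : (1 - t) * ‖x‖ ≤ ρ / (2 * (‖x‖ + 1)) * (‖x‖ + 1) :=
        mul_le_mul h1t (by linarith) (norm_nonneg x) (by positivity)
      linarith
    have hyV : y ∈ V := hball (by rw [Metric.mem_ball, dist_eq_norm]; exact hyx)
    have hylt : ‖y‖ < r := by
      rw [hy_def, norm_smul, Real.norm_eq_abs, abs_of_pos ht0]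
      calc t * ‖x‖ ≤ t * r := by nlinarith
        _ < 1 * r := by nlinarith
        _ = r := one_mul r
    have hyq : ‖y‖ ^ q < 1 - (ε / 2) ^ q := by
      rw [← hrq]
      exact Real.rpow_lt_rpow (norm_nonneg y) hylt hq0
    -- the parameter s
    set sq : ℝ := (ε / 2) ^ q + (1 - (ε / 2) ^ q - ‖y‖ ^ q) / 2 with hsq_def
    have hsq_pos : (ε / 2) ^ q < sq := by rw [hsq_def]; linarith
    have hsq0 : 0 ≤ sq := le_trans hpow0 hsq_pos.le
    set s : ℝ := sq ^ (1 / q) with hs_def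
    have hs0 : 0 ≤ s := Real.rpow_nonneg hsq0 _
    have hsq_eq : s ^ q = sq := by rw [hs_def, one_div, Real.rpow_inv_rpow hsq0 hq0']
    have hs2 : ε / 2 < s := by
      have h1 : (ε/2) = ((ε / 2) ^ q) ^ (1/q) := by
        rw [one_div, Real.rpow_rpow_inv h2ε.le hq0']
      rw [hs_def, h1]
      exact Real.rpow_lt_rpow hpow0 hsq_pos (by positivity)
    have hsum_lt : ‖y‖ ^ q + s ^ q < 1 := by rw [hsq_eq, hsq_def]; linarith
    have hsum0 : 0 ≤ ‖y‖ ^ q + s ^ q :=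
      add_nonneg (Real.rpow_nonneg (norm_nonneg _) _) (Real.rpow_nonneg hs0 _)
    -- limsup computations
    have hnorm_const : ∀ c : ℝ, (fun n => ‖c • g n‖) = fun _ => |c| := by
      intro c; funext n; rw [norm_smul, hg1 n, mul_one, Real.norm_eq_abs]
    have hlim : ∀ c : ℝ, c ≠ 0 →
        Filter.limsup (fun n => ‖y + c • g n‖) Filter.atTop = (‖y‖ ^ q + |c| ^ q) ^ (1/q) := by
      intro c hc
      rw [hmq y (fun n => c • g n) (hnull c), hnorm_const c, limsup_const]
    have hlt1 : ∀ c : ℝ, |c| = s → c ≠ 0 →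
        Filter.limsup (fun n => ‖y + c • g n‖) Filter.atTop < 1 := by
      intro c hcs hc
      rw [hlim c hc, hcs]
      exact Real.rpow_lt_one hsum0 hsum_lt (by positivity)
    have hspos : 0 < s :=
      Real.rpow_pos_of_pos (lt_of_lt_of_le (Real.rpow_pos_of_pos h2ε q) hsq_pos.le) _
    have hsne : s ≠ 0 := ne_of_gt hspos
    have habs : |s| = s := abs_of_pos hspos
    have habs' : |(-s)| = s := by rw [abs_neg]; exact habs
    have hbdd : ∀ c : ℝ, IsBoundedUnder (· ≤ ·) atTop (fun n => ‖y + c • g n‖) := by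
      intro c
      refine isBoundedUnder_of ⟨‖y‖ + |c|, fun n => ?_⟩
      calc ‖y + c • g n‖ ≤ ‖y‖ + ‖c • g n‖ := norm_add_le _ _
        _ = ‖y‖ + |c| := by congr 1; rw [norm_smul, hg1 n, mul_one, Real.norm_eq_abs]
    have hev1 : ∀ᶠ n in atTop, ‖y + s • g n‖ < 1 :=
      eventually_lt_of_limsup_lt (hlt1 s habs hsne) (hbdd s)
    have hev2 : ∀ᶠ n in atTop, ‖y + (-s) • g n‖ < 1 :=
      eventually_lt_of_limsup_lt (hlt1 (-s) habs' (neg_ne_zero.2 hsne)) (hbdd (-s))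
    -- eventually in V
    have hmemV : ∀ c : ℝ, ∀ᶠ n in atTop, y + c • g n ∈ V := by
      intro c
      have htend : Tendsto (fun n => StrongDual.toWeakDual (y + c • g n)) atTop
          (𝓝 (StrongDual.toWeakDual y)) := by
        have h1 := (hnull c)
        have : Tendsto (fun n => StrongDual.toWeakDual y
            + StrongDual.toWeakDual (c • g n)) atTop
            (𝓝 (StrongDual.toWeakDual y + 0)) := tendsto_const_nhds.add h1
        simpa [map_add] using this
      have hmemnhds : (StrongDual.toWeakDual '' V : Set (WeakDual ℝ X))
          ∈ 𝓝 (StrongDual.toWeakDual y) := hVo.mem_nhds ⟨y, hyV, rfl⟩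
      filter_upwards [htend hmemnhds] with n hn
      obtain ⟨w, hwV, hwe⟩ := hn
      rwa [← (LinearEquiv.injective StrongDual.toWeakDual) hwe]
    obtain ⟨n, ⟨hn1, hn2⟩, hn3, hn4⟩ :=
      ((hev1.and hev2).and ((hmemV s).and (hmemV (-s)))).exists
    have hp1 : y + s • g n ∈ Metric.closedBall (0 : StrongDual ℝ X) 1 ∩ V :=
      ⟨by rw [Metric.mem_closedBall, dist_zero_right]; exact hn1.le, hn3⟩
    have hp2 : y + (-s) • g n ∈ Metric.closedBall (0 : StrongDual ℝ X) 1 ∩ V :=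
      ⟨by rw [Metric.mem_closedBall, dist_zero_right]; exact hn2.le, hn4⟩
    have hdist : dist (y + s • g n) (y + (-s) • g n) = 2 * s := by
      rw [dist_eq_norm]
      have : (y + s • g n) - (y + (-s) • g n) = (2 * s) • g n := by
        module
      rw [this, norm_smul, hg1 n, mul_one, Real.norm_eq_abs, abs_of_nonneg (by positivity)]
    calc ε < 2 * s := by linarith
      _ = dist (y + s • g n) (y + (-s) • g n) := hdist.symm
      _ ≤ Metric.diam (Metric.closedBall (0 : StrongDual ℝ X) 1 ∩ V) :=
        Metric.dist_le_diam_of_mem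
          (Metric.isBounded_closedBall.subset Set.inter_subset_left) hp1 hp2
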